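/- arXiv:1811.07185 — 5 statements merged into one kernel-verified Lean document; each statement's English description precedes it below -/
import Mathlib

section
/- Let λ > 0, h > 0, a = √(λ/2), and define R(v) = sinh((h−v)a)/sinh(ha) and Q(v) = cosh((h−v)a)/(√(2λ)·sinh(ha)) − I₀(v·a)/(√(2λ)·sinh(ha)·I₀(h·a)). Then Q satisfies the inhomogeneous ODE 2v·Q''(v) + 2Q'(v) − λ·v·Q(v) = −R(v) for all v ∈ (0,h), with boundary condition Q(h) = 0. -/
/-- The modified Bessel function of the first kind of order 0. -/
noncomputable def besselI0 (x : ℝ) : ℝ := ∑' m : ℕ, (x / 2) ^ (2 * m) / (Nat.factorial m : ℝ) ^ 2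

namespace BesselAux

noncomputable def T0 (m : ℕ) (x : ℝ) : ℝ := (x / 2) ^ (2 * m) / (Nat.factorial m : ℝ) ^ 2

noncomputable def T1 (m : ℕ) (x : ℝ) : ℝ :=
  (m : ℝ) * (x / 2) ^ (2 * m - 1) / (Nat.factorial m : ℝ) ^ 2

noncomputable def T2 (m : ℕ) (x : ℝ) : ℝ :=
  (m : ℝ) * ((2 * m - 1 : ℕ) : ℝ) * (x / 2) ^ (2 * m - 2) / (2 * (Nat.factorial m : ℝ) ^ 2)

noncomputable def I1 (x : ℝ) : ℝ := ∑' m : ℕ, T1 m x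

noncomputable def I2 (x : ℝ) : ℝ := ∑' m : ℕ, T2 m x

lemma fact_pos (m : ℕ) : (0 : ℝ) < (Nat.factorial m : ℝ) := by
  exact_mod_cast m.factorial_pos

lemma one_le_fact (m : ℕ) : (1 : ℝ) ≤ (Nat.factorial m : ℝ) := by
  exact_mod_cast m.factorial_pos

lemma m_sq_le (m : ℕ) : ((m : ℝ)) ^ 2 ≤ 4 ^ m := by
  have h1 : m ^ 2 ≤ 4 ^ m := by
    calc m ^ 2 ≤ (2 ^ m) ^ 2 := Nat.pow_le_pow_left (Nat.le_of_lt (Nat.lt_two_pow_self (n := m))) 2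
    _ = 4 ^ m := by rw [← Nat.pow_mul, Nat.pow_mul']
  exact_mod_cast h1

/-- Master bound for terms of the form `c * (x/2)^k / (m!)^2`. -/
lemma bound_aux (m : ℕ) (c : ℝ) (hc : 0 ≤ c) (hcb : c ≤ 4 * 4 ^ m) (y : ℝ) (M : ℝ)
    (hM : 1 ≤ M) (hy : |y / 2| ≤ M) (k : ℕ) (hk : k ≤ 2 * m) :
    |c * (y / 2) ^ k / (Nat.factorial m : ℝ) ^ 2| ≤ 4 * (4 * M ^ 2) ^ m / Nat.factorial m := by
  have hM0 : (0 : ℝ) ≤ M := le_trans zero_le_one hM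
  have h1 : |(y / 2) ^ k| ≤ M ^ k := by
    rw [abs_pow]; exact pow_le_pow_left₀ (abs_nonneg _) hy k
  have h2 : M ^ k ≤ M ^ (2 * m) := pow_le_pow_right₀ hM hk
  have h3 : (Nat.factorial m : ℝ) ≤ (Nat.factorial m : ℝ) ^ 2 := by
    nlinarith [one_le_fact m, fact_pos m]
  have hf := fact_pos m
  have hden : |(Nat.factorial m : ℝ) ^ 2| = (Nat.factorial m : ℝ) ^ 2 :=
    abs_of_nonneg (by positivity)
  calc |c * (y / 2) ^ k / (Nat.factorial m : ℝ) ^ 2|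
      = c * |(y / 2) ^ k| / (Nat.factorial m : ℝ) ^ 2 := by
        rw [abs_div, abs_mul, abs_of_nonneg hc, hden]
    _ ≤ (4 * 4 ^ m) * M ^ (2 * m) / (Nat.factorial m : ℝ) := by
        apply div_le_div₀ (by positivity) ?_ (by positivity) h3
        exact mul_le_mul hcb (le_trans h1 h2) (abs_nonneg _) (by positivity)
    _ = 4 * (4 * M ^ 2) ^ m / Nat.factorial m := by
        rw [mul_pow, pow_mul]; ring

lemma summable_u (M : ℝ) : Summable (fun m : ℕ => 4 * (4 * M ^ 2) ^ m / Nat.factorial m) := by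
  simpa [mul_div_assoc] using (Real.summable_pow_div_factorial (4 * M ^ 2)).mul_left 4

lemma one_le_four_pow (m : ℕ) : (1 : ℝ) ≤ 4 ^ m := by
  exact_mod_cast Nat.one_le_pow m 4 (by norm_num)

lemma m_le_four_pow (m : ℕ) : (m : ℝ) ≤ 4 ^ m := by
  exact_mod_cast (Nat.lt_pow_self (n := m) (by norm_num : 1 < 4)).le

lemma bound_T0 (m : ℕ) (y M : ℝ) (hM : 1 ≤ M) (hy : |y / 2| ≤ M) :
    |T0 m y| ≤ 4 * (4 * M ^ 2) ^ m / Nat.factorial m := by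
  have := bound_aux m 1 zero_le_one (by nlinarith [one_le_four_pow m]) y M hM hy (2 * m) le_rfl
  simpa [T0] using this

lemma bound_T1 (m : ℕ) (y M : ℝ) (hM : 1 ≤ M) (hy : |y / 2| ≤ M) :
    |T1 m y| ≤ 4 * (4 * M ^ 2) ^ m / Nat.factorial m := by
  have hcb : (m : ℝ) ≤ 4 * 4 ^ m := by
    nlinarith [m_le_four_pow m, one_le_four_pow m]
  have := bound_aux m m (Nat.cast_nonneg m) hcb y M hM hy (2 * m - 1) (by omega)
  simpa [T1] using this

lemma bound_T2 (m : ℕ) (y M : ℝ) (hM : 1 ≤ M) (hy : |y / 2| ≤ M) :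
    |T2 m y| ≤ 4 * (4 * M ^ 2) ^ m / Nat.factorial m := by
  have hc : (0 : ℝ) ≤ (m : ℝ) * ((2 * m - 1 : ℕ) : ℝ) / 2 := by positivity
  have hcb : (m : ℝ) * ((2 * m - 1 : ℕ) : ℝ) / 2 ≤ 4 * 4 ^ m := by
    have h1 : ((2 * m - 1 : ℕ) : ℝ) ≤ 2 * m := by
      have h2 : (2 * m - 1 : ℕ) ≤ 2 * m := by omega
      calc ((2 * m - 1 : ℕ) : ℝ) ≤ ((2 * m : ℕ) : ℝ) := by exact_mod_cast h2
        _ = 2 * m := by push_cast; ring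
    nlinarith [m_sq_le m, Nat.cast_nonneg (α := ℝ) m, one_le_four_pow m]
  have := bound_aux m ((m : ℝ) * ((2 * m - 1 : ℕ) : ℝ) / 2) hc hcb y M hM hy
    (2 * m - 2) (by omega)
  have heq : (m : ℝ) * ((2 * m - 1 : ℕ) : ℝ) / 2 * (y / 2) ^ (2 * m - 2) /
      (Nat.factorial m : ℝ) ^ 2 = T2 m y := by
    unfold T2; ring
  rwa [heq] at this

lemma summable_T0 (x : ℝ) : Summable (fun m => T0 m x) := by
  refine Summable.of_norm_bounded (summable_u (max 1 (|x| / 2))) fun m => ?_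
  exact bound_T0 m x _ (le_max_left _ _)
    (by rw [abs_div]; simpa using le_max_right 1 (|x| / 2))

lemma summable_T1 (x : ℝ) : Summable (fun m => T1 m x) := by
  refine Summable.of_norm_bounded (summable_u (max 1 (|x| / 2))) fun m => ?_
  exact bound_T1 m x _ (le_max_left _ _)
    (by rw [abs_div]; simpa using le_max_right 1 (|x| / 2))

lemma summable_T2 (x : ℝ) : Summable (fun m => T2 m x) := by
  refine Summable.of_norm_bounded (summable_u (max 1 (|x| / 2))) fun m => ?_
  exact bound_T2 m x _ (le_max_left _ _)
    (by rw [abs_div]; simpa using le_max_right 1 (|x| / 2))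

lemma hasDerivAt_T0 (m : ℕ) (x : ℝ) : HasDerivAt (fun y => T0 m y) (T1 m x) x := by
  have h : HasDerivAt (fun y : ℝ => (y / 2) ^ (2 * m) / (Nat.factorial m : ℝ) ^ 2)
      ((2 * m : ℕ) * (x / 2) ^ (2 * m - 1) * (1 / 2) / (Nat.factorial m : ℝ) ^ 2) x :=
    (((hasDerivAt_id x).div_const 2).pow (2 * m)).div_const _
  convert h using 1
  · rfl
  unfold T1; push_cast; ring

lemma hasDerivAt_T1 (m : ℕ) (x : ℝ) : HasDerivAt (fun y => T1 m y) (T2 m x) x := by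
  have hfun : (fun y => T1 m y) =
      fun y : ℝ => (m : ℝ) / (Nat.factorial m : ℝ) ^ 2 * (y / 2) ^ (2 * m - 1) := by
    funext y; unfold T1; ring
  have h : HasDerivAt
      (fun y : ℝ => (m : ℝ) / (Nat.factorial m : ℝ) ^ 2 * (y / 2) ^ (2 * m - 1))
      ((m : ℝ) / (Nat.factorial m : ℝ) ^ 2 *
        ((2 * m - 1 : ℕ) * (x / 2) ^ (2 * m - 1 - 1) * (1 / 2))) x :=
    (((hasDerivAt_id x).div_const 2).pow (2 * m - 1)).const_mul _
  have heq : (m : ℝ) / (Nat.factorial m : ℝ) ^ 2 *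
      ((2 * m - 1 : ℕ) * (x / 2) ^ (2 * m - 1 - 1) * (1 / 2)) = T2 m x := by
    unfold T2
    rcases Nat.eq_zero_or_pos m with hm | hm
    · subst hm; norm_num
    · have he : 2 * m - 1 - 1 = 2 * m - 2 := by omega
      rw [he]; ring
  rw [hfun, ← heq]
  exact h

lemma hasDerivAt_besselI0 (x : ℝ) : HasDerivAt besselI0 (I1 x) x := by
  set r : ℝ := |x| + 1 with hr
  set M : ℝ := max 1 (r / 2) with hM
  have hM1 : 1 ≤ M := le_max_left _ _
  have hmem : ∀ y ∈ Metric.ball (0 : ℝ) r, |y / 2| ≤ M := by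
    intro y hy
    rw [Metric.mem_ball, Real.dist_eq, sub_zero] at hy
    rw [abs_div]
    calc |y| / |2| = |y| / 2 := by norm_num
      _ ≤ r / 2 := by linarith
      _ ≤ M := le_max_right _ _
  have hx : x ∈ Metric.ball (0 : ℝ) r := by
    rw [Metric.mem_ball, Real.dist_eq, sub_zero]; simp [hr]
  have h0 : (0 : ℝ) ∈ Metric.ball (0 : ℝ) r := by
    rw [Metric.mem_ball, Real.dist_eq, sub_zero]; simp [hr]; positivity
  have := hasDerivAt_tsum_of_isPreconnected (summable_u M) Metric.isOpen_ball
    (convex_ball (0:ℝ) r).isPreconnected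
    (fun m y _ => hasDerivAt_T0 m y)
    (fun m y hy => by
      simpa using bound_T1 m y M hM1 (hmem y hy))
    h0 (summable_T0 0) hx
  exact this

lemma hasDerivAt_I1 (x : ℝ) : HasDerivAt I1 (I2 x) x := by
  set r : ℝ := |x| + 1 with hr
  set M : ℝ := max 1 (r / 2) with hM
  have hM1 : 1 ≤ M := le_max_left _ _
  have hmem : ∀ y ∈ Metric.ball (0 : ℝ) r, |y / 2| ≤ M := by
    intro y hy
    rw [Metric.mem_ball, Real.dist_eq, sub_zero] at hy
    rw [abs_div]
    calc |y| / |2| = |y| / 2 := by norm_num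
      _ ≤ r / 2 := by linarith
      _ ≤ M := le_max_right _ _
  have hx : x ∈ Metric.ball (0 : ℝ) r := by
    rw [Metric.mem_ball, Real.dist_eq, sub_zero]; simp [hr]
  have h0 : (0 : ℝ) ∈ Metric.ball (0 : ℝ) r := by
    rw [Metric.mem_ball, Real.dist_eq, sub_zero]; simp [hr]; positivity
  exact hasDerivAt_tsum_of_isPreconnected (summable_u M) Metric.isOpen_ball
    (convex_ball (0:ℝ) r).isPreconnected
    (fun m y _ => hasDerivAt_T1 m y)
    (fun m y hy => by simpa using bound_T2 m y M hM1 (hmem y hy))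
    h0 (summable_T1 0) hx

lemma besselI0_pos (x : ℝ) : 0 < besselI0 x := by
  have hnn : ∀ m : ℕ, 0 ≤ (x / 2) ^ (2 * m) / (Nat.factorial m : ℝ) ^ 2 := by
    intro m
    apply div_nonneg _ (by positivity)
    rw [pow_mul']
    positivity
  exact Summable.tsum_pos (summable_T0 x) hnn 0 (by norm_num)

/-- The Bessel ODE: `x * I₀''(x) + I₀'(x) - x * I₀(x) = 0`. -/
lemma bessel_ode (x : ℝ) : x * I2 x + I1 x - x * besselI0 x = 0 := by
  have hA : ∀ m : ℕ, x * T2 m x + T1 m x =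
      2 * (m : ℝ) ^ 2 * (x / 2) ^ (2 * m - 1) / (Nat.factorial m : ℝ) ^ 2 := by
    intro m
    cases m with
    | zero => simp [T1, T2]
    | succ k =>
      unfold T1 T2
      have h1 : 2 * (k + 1) - 1 = 2 * k + 1 := by omega
      have h2 : 2 * (k + 1) - 2 = 2 * k := by omega
      have hk : ((k + 1).factorial : ℝ) ≠ 0 := (fact_pos (k + 1)).ne'
      rw [h1, h2]
      push_cast
      field_simp
      ring
  have hB : ∀ m : ℕ, x * T0 m x = 2 * (x / 2) ^ (2 * m + 1) / (Nat.factorial m : ℝ) ^ 2 := by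
    intro m
    unfold T0
    ring
  have hsumA : Summable (fun m => x * T2 m x + T1 m x) :=
    ((summable_T2 x).mul_left x).add (summable_T1 x)
  have hLHS : x * I2 x + I1 x = ∑' m : ℕ, (x * T2 m x + T1 m x) := by
    unfold I1 I2
    rw [← tsum_mul_left, Summable.tsum_add ((summable_T2 x).mul_left x) (summable_T1 x)]
  have hRHS : x * besselI0 x = ∑' m : ℕ, x * T0 m x := by
    unfold besselI0
    rw [← tsum_mul_left]
    exact tsum_congr fun m => rfl
  rw [hLHS, hRHS, sub_eq_zero]
  rw [Summable.tsum_eq_zero_add hsumA]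
  have h0 : x * T2 0 x + T1 0 x = 0 := by simp [T1, T2]
  rw [h0, zero_add]
  apply tsum_congr
  intro k
  rw [hA (k + 1), hB k]
  have h1 : 2 * (k + 1) - 1 = 2 * k + 1 := by omega
  rw [h1, Nat.factorial_succ]
  have hk : (Nat.factorial k : ℝ) ≠ 0 := (fact_pos k).ne'
  have hk1 : ((k : ℝ) + 1) ≠ 0 := by positivity
  push_cast
  field_simp

end BesselAux

open BesselAux in
theorem stmt2 (lam h : ℝ) (hlam : 0 < lam) (hh : 0 < h) :
    let a := Real.sqrt (lam / 2)
    let R : ℝ → ℝ := fun v => Real.sinh ((h - v) * a) / Real.sinh (h * a)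
    let Q : ℝ → ℝ := fun v =>
      Real.cosh ((h - v) * a) / (Real.sqrt (2 * lam) * Real.sinh (h * a))
        - besselI0 (v * a) / (Real.sqrt (2 * lam) * Real.sinh (h * a) * besselI0 (h * a))
    (∀ v ∈ Set.Ioo (0 : ℝ) h,
        2 * v * deriv (deriv Q) v + 2 * deriv Q v - lam * v * Q v = - R v) ∧
      Q h = 0 := by
  intro a R Q
  have ha : 0 < a := Real.sqrt_pos.mpr (by positivity)
  have ha2 : a * a = lam / 2 := Real.mul_self_sqrt (by positivity)
  have hs2 : Real.sqrt (2 * lam) = 2 * a := by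
    rw [show (2 : ℝ) * lam = 2 ^ 2 * (lam / 2) by ring, Real.sqrt_mul (by positivity),
      Real.sqrt_sq (by norm_num)]
  have hsinh : 0 < Real.sinh (h * a) := Real.sinh_pos_iff.mpr (by positivity)
  have hI0 : 0 < besselI0 (h * a) := besselI0_pos _
  have hQdef : ∀ v, Q v = Real.cosh ((h - v) * a) / (2 * a * Real.sinh (h * a))
      - besselI0 (v * a) / (2 * a * Real.sinh (h * a) * besselI0 (h * a)) := by
    intro v; simp only [Q, hs2]
  -- first derivative
  set Q1 : ℝ → ℝ := fun v => Real.sinh ((h - v) * a) * (-a) / (2 * a * Real.sinh (h * a))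
      - I1 (v * a) * a / (2 * a * Real.sinh (h * a) * besselI0 (h * a)) with hQ1def
  have hder1 : ∀ v, HasDerivAt Q (Q1 v) v := by
    intro v
    have h1 : HasDerivAt (fun v : ℝ => (h - v) * a) (-a) v := by
      simpa using ((hasDerivAt_id v).const_sub h).mul_const a
    have h2 : HasDerivAt (fun v : ℝ => v * a) a v := by
      simpa using (hasDerivAt_id v).mul_const a
    have hc : HasDerivAt (fun v : ℝ => Real.cosh ((h - v) * a))
        (Real.sinh ((h - v) * a) * (-a)) v := h1.cosh
    have hb : HasDerivAt (fun v : ℝ => besselI0 (v * a)) (I1 (v * a) * a) v :=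
      by have := (hasDerivAt_besselI0 (v * a)).comp v h2; exact this
    have := (hc.div_const (2 * a * Real.sinh (h * a))).sub
      (hb.div_const (2 * a * Real.sinh (h * a) * besselI0 (h * a)))
    have hfun : Q = fun v => Real.cosh ((h - v) * a) / (2 * a * Real.sinh (h * a))
        - besselI0 (v * a) / (2 * a * Real.sinh (h * a) * besselI0 (h * a)) := by
      funext v; exact hQdef v
    rw [hfun]
    exact this
  -- second derivative
  set Q2 : ℝ → ℝ := fun v => Real.cosh ((h - v) * a) * a * a / (2 * a * Real.sinh (h * a))
      - I2 (v * a) * a * a / (2 * a * Real.sinh (h * a) * besselI0 (h * a)) with hQ2def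
  have hder2 : ∀ v, HasDerivAt Q1 (Q2 v) v := by
    intro v
    have h1 : HasDerivAt (fun v : ℝ => (h - v) * a) (-a) v := by
      simpa using ((hasDerivAt_id v).const_sub h).mul_const a
    have h2 : HasDerivAt (fun v : ℝ => v * a) a v := by
      simpa using (hasDerivAt_id v).mul_const a
    have hs : HasDerivAt (fun v : ℝ => Real.sinh ((h - v) * a) * (-a))
        (Real.cosh ((h - v) * a) * (-a) * (-a)) v := h1.sinh.mul_const (-a)
    have hb : HasDerivAt (fun v : ℝ => I1 (v * a) * a) (I2 (v * a) * a * a) v :=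
      by have := ((hasDerivAt_I1 (v * a)).comp v h2).mul_const a; exact this
    have := (hs.div_const (2 * a * Real.sinh (h * a))).sub
      (hb.div_const (2 * a * Real.sinh (h * a) * besselI0 (h * a)))
    simp only [hQ1def]
    refine this.congr_deriv ?_
    simp only [Q2]; ring
  have hderivQ : deriv Q = Q1 := funext fun v => (hder1 v).deriv
  constructor
  · intro v _
    rw [hderivQ, (hder2 v).deriv]
    have hode := bessel_ode (v * a)
    simp only [hQ1def, hQ2def, hQdef, R]
    field_simp
    linear_combination (-2 * a) * hode +
      (2 * v * (Real.cosh ((h - v) * a) * besselI0 (h * a) - besselI0 (v * a))) * ha2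
  · rw [hQdef h, sub_self, zero_mul, Real.cosh_zero]
    field_simp
    rw [div_self (besselI0_pos _).ne']; ring
end

section
/- For every λ > 0 and every real a ≥ 0, λ·∫₀^∞ e^{−λt}·e^{−a²/(2t)}/√(2πt) dt = √(λ/2)·e^{−a√(2λ)}. -/
open Real MeasureTheory Set

/-- Glasser-type: ∫₀^∞ exp(-b (s - c/s)^2) ds = √(π/b)/2 for b, c > 0. -/
lemma glasser_aux {b c : ℝ} (hb : 0 < b) (hc : 0 < c) :
    ∫ s in Ioi (0:ℝ), Real.exp (-b * (s - c / s) ^ 2) = Real.sqrt (π / b) / 2 := by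
  set g : ℝ → ℝ := fun s => Real.exp (-b * (s - c / s) ^ 2) with hg
  -- substitution u = s - c/s, mapping Ioi 0 onto ℝ
  have hderiv : ∀ x ∈ Ioi (0:ℝ),
      HasDerivWithinAt (fun s => s - c / s) (1 + c / x ^ 2) (Ioi 0) x := by
    intro x hx
    have hx0 : x ≠ 0 := ne_of_gt hx
    have h1 : HasDerivAt (fun s : ℝ => s - c / s) (1 - c * (-(x ^ 2)⁻¹)) x := by
      simpa [div_eq_mul_inv] using
        (hasDerivAt_id' x).fun_sub ((hasDerivAt_inv hx0).const_mul c)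
    have : (1 : ℝ) - c * (-(x ^ 2)⁻¹) = 1 + c / x ^ 2 := by ring
    exact (this ▸ h1).hasDerivWithinAt
  have hinj : InjOn (fun s : ℝ => s - c / s) (Ioi 0) := by
    have hmono : StrictMonoOn (fun s : ℝ => s - c / s) (Ioi 0) := by
      intro x hx y hy hxy
      have h1 : c / y < c / x := div_lt_div_of_pos_left hc hx hxy
      simp only [mem_Ioi] at *
      have : x - c / x < y - c / y := by linarith
      simpa using this
    exact hmono.injOn
  have himg : (fun s : ℝ => s - c / s) '' Ioi 0 = univ := by
    apply eq_univ_of_forall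
    intro u
    set r := Real.sqrt (u ^ 2 + 4 * c) with hrdef
    have hr2 : r ^ 2 = u ^ 2 + 4 * c := Real.sq_sqrt (by positivity)
    have habs : |u| < r := by
      rw [hrdef, ← Real.sqrt_sq_eq_abs]
      exact Real.sqrt_lt_sqrt (sq_nonneg u) (by linarith)
    have hs0 : 0 < (u + r) / 2 := by
      have := neg_abs_le u; linarith
    refine ⟨(u + r) / 2, hs0, ?_⟩
    have hsne : (u + r) / 2 ≠ 0 := ne_of_gt hs0
    have hdiv : c / ((u + r) / 2) = (u + r) / 2 - u := by
      rw [div_eq_iff hsne]; nlinarith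
    show (u + r) / 2 - c / ((u + r) / 2) = u
    rw [hdiv]; ring
  have key := integral_image_eq_integral_abs_deriv_smul measurableSet_Ioi hderiv hinj
    (fun x => Real.exp (-b * x ^ 2))
  rw [himg, Measure.restrict_univ, integral_gaussian b] at key
  -- identify the RHS
  have hrhs : ∫ s in Ioi (0:ℝ), |1 + c / s ^ 2| • Real.exp (-b * (s - c / s) ^ 2)
      = ∫ s in Ioi (0:ℝ), (g s + (c / s ^ 2) * g s) := by
    apply setIntegral_congr_fun measurableSet_Ioi
    intro s hs
    have hs0 : (0:ℝ) < s := hs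
    have h1 : (0:ℝ) < 1 + c / s ^ 2 := by positivity
    dsimp only
    rw [abs_of_pos h1, smul_eq_mul, hg]
    ring
  -- integrability of g on Ioi 0
  have hgcont : ContinuousOn g (Ioi (0:ℝ)) := by
    apply Real.continuous_exp.comp_continuousOn
    exact continuousOn_const.mul
      ((continuousOn_id.sub (continuousOn_const.div continuousOn_id
        fun x hx => ne_of_gt hx)).pow 2)
  have hgint : IntegrableOn g (Ioi (0:ℝ)) := by
    apply Integrable.mono' ((integrable_exp_neg_mul_sq hb).const_mul
      (Real.exp (2 * b * c))).integrableOn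
      (hgcont.aestronglyMeasurable measurableSet_Ioi)
    filter_upwards [ae_restrict_mem measurableSet_Ioi] with s hs
    have hs0 : (0:ℝ) < s := hs
    rw [hg, Real.norm_eq_abs, abs_of_pos (Real.exp_pos _), ← Real.exp_add]
    apply Real.exp_le_exp.2
    have h1 : 0 ≤ b * (c / s) ^ 2 := by positivity
    have h2 : (s - c / s) ^ 2 = s ^ 2 - 2 * c + (c / s) ^ 2 := by
      field_simp; ring
    nlinarith
  -- substitution x ↦ c/x on Ioi 0
  have hderiv2 : ∀ x ∈ Ioi (0:ℝ),
      HasDerivWithinAt (fun s : ℝ => c / s) (-(c / x ^ 2)) (Ioi 0) x := by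
    intro x hx
    have hx0 : x ≠ 0 := ne_of_gt hx
    have h1 : HasDerivAt (fun s : ℝ => c / s) (c * (-(x ^ 2)⁻¹)) x := by
      simpa [div_eq_mul_inv] using (hasDerivAt_inv hx0).const_mul c
    have : c * (-(x ^ 2)⁻¹) = -(c / x ^ 2) := by ring
    exact (this ▸ h1).hasDerivWithinAt
  have hinj2 : InjOn (fun s : ℝ => c / s) (Ioi 0) := by
    intro x hx y hy h
    have hx0 : (0:ℝ) < x := hx
    have hy0 : (0:ℝ) < y := hy
    dsimp only at h
    rw [div_eq_div_iff hx0.ne' hy0.ne'] at h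
    exact mul_left_cancel₀ hc.ne' h.symm
  have himg2 : (fun s : ℝ => c / s) '' Ioi 0 = Ioi 0 := by
    ext y
    constructor
    · rintro ⟨x, hx, rfl⟩
      exact div_pos hc hx
    · intro hy
      exact ⟨c / y, div_pos hc hy, by field_simp⟩
  have hcomp : ∀ s ∈ Ioi (0:ℝ), |(-(c / s ^ 2))| • g (c / s) = (c / s ^ 2) * g s := by
    intro s hs
    have hs0 : (0:ℝ) < s := hs
    have h1 : |(-(c / s ^ 2))| = c / s ^ 2 := by
      rw [abs_neg, abs_of_pos (by positivity)]
    have hcc : c / (c / s) = s := by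
      field_simp
    rw [h1, smul_eq_mul, hg]
    dsimp only
    rw [hcc, show c / s - s = -(s - c / s) by ring, neg_sq]
  have hint2 : IntegrableOn (fun s => (c / s ^ 2) * g s) (Ioi (0:ℝ)) := by
    have := (integrableOn_image_iff_integrableOn_abs_deriv_smul measurableSet_Ioi
      hderiv2 hinj2 g).1 (by rwa [himg2])
    exact this.congr_fun hcomp measurableSet_Ioi
  have heq2 : ∫ s in Ioi (0:ℝ), (c / s ^ 2) * g s = ∫ s in Ioi (0:ℝ), g s := by
    have h := integral_image_eq_integral_abs_deriv_smul measurableSet_Ioi hderiv2 hinj2 g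
    rw [himg2] at h
    calc ∫ s in Ioi (0:ℝ), (c / s ^ 2) * g s
        = ∫ s in Ioi (0:ℝ), |(-(c / s ^ 2))| • g (c / s) :=
          (setIntegral_congr_fun measurableSet_Ioi hcomp).symm
      _ = ∫ s in Ioi (0:ℝ), g s := h.symm
  rw [hrhs, integral_add hgint hint2, heq2] at key
  linarith [key]

/-- Core: ∫₀^∞ exp(-(b s² + β/s²)) ds. -/
lemma core_aux {b β : ℝ} (hb : 0 < b) (hβ : 0 ≤ β) :
    ∫ s in Ioi (0:ℝ), Real.exp (-(b * s ^ 2 + β / s ^ 2))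
      = Real.sqrt (π / b) / 2 * Real.exp (-(2 * Real.sqrt (b * β))) := by
  rcases eq_or_lt_of_le hβ with h0 | hβpos
  · simp only [← h0, zero_div, add_zero, mul_zero, Real.sqrt_zero, neg_zero, Real.exp_zero,
      mul_one]
    simpa [neg_mul] using integral_gaussian_Ioi b
  · set c := Real.sqrt (β / b) with hcdef
    have hc : 0 < c := Real.sqrt_pos.2 (by positivity)
    have hc2 : c ^ 2 = β / b := Real.sq_sqrt (by positivity)
    have hβc : β = b * c ^ 2 := by rw [hc2]; field_simp
    have hbc : b * c = Real.sqrt (b * β) := by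
      rw [show b * β = b ^ 2 * (β / b) by field_simp,
        Real.sqrt_mul (sq_nonneg b), Real.sqrt_sq hb.le, ← hcdef]
    have hcong : ∫ s in Ioi (0:ℝ), Real.exp (-(b * s ^ 2 + β / s ^ 2))
        = ∫ s in Ioi (0:ℝ), Real.exp (-b * (s - c / s) ^ 2)
            * Real.exp (-(2 * Real.sqrt (b * β))) := by
      apply setIntegral_congr_fun measurableSet_Ioi
      intro s hs
      have hs0 : (0:ℝ) < s := hs
      dsimp only
      rw [← Real.exp_add, ← hbc, hβc]
      congr 1
      field_simp
      ring
    rw [hcong, integral_mul_const, glasser_aux hb hc]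

theorem stmt12 (lam a : ℝ) (hlam : 0 < lam) (ha : 0 ≤ a) :
    lam * ∫ t in Set.Ioi (0:ℝ),
        Real.exp (-lam * t) * Real.exp (-a ^ 2 / (2 * t)) / Real.sqrt (2 * Real.pi * t)
      = Real.sqrt (lam / 2) * Real.exp (-a * Real.sqrt (2 * lam)) := by
  have h2π : (0:ℝ) < 2 * π := by positivity
  set F : ℝ → ℝ := fun t =>
    Real.exp (-lam * t) * Real.exp (-a ^ 2 / (2 * t)) / Real.sqrt (2 * Real.pi * t) with hF
  -- substitution t = s^2
  have hderiv : ∀ x ∈ Ioi (0:ℝ), HasDerivWithinAt (fun s : ℝ => s ^ 2) (2 * x) (Ioi 0) x := by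
    intro x hx
    simpa using (hasDerivAt_pow 2 x).hasDerivWithinAt
  have hinj : InjOn (fun s : ℝ => s ^ 2) (Ioi 0) := by
    intro x hx y hy h
    have hx0 : (0:ℝ) < x := hx
    have hy0 : (0:ℝ) < y := hy
    have h' : x ^ 2 = y ^ 2 := h
    calc x = Real.sqrt (x ^ 2) := (Real.sqrt_sq hx0.le).symm
      _ = Real.sqrt (y ^ 2) := by rw [h']
      _ = y := Real.sqrt_sq hy0.le
  have himg : (fun s : ℝ => s ^ 2) '' Ioi 0 = Ioi 0 := by
    ext y
    constructor
    · rintro ⟨x, hx, rfl⟩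
      exact pow_pos (mem_Ioi.mp hx) 2
    · intro hy
      exact ⟨Real.sqrt y, Real.sqrt_pos.2 hy, Real.sq_sqrt (le_of_lt hy)⟩
  have hsub := integral_image_eq_integral_abs_deriv_smul measurableSet_Ioi hderiv hinj F
  rw [himg] at hsub
  have hcong : ∫ s in Ioi (0:ℝ), |2 * s| • F (s ^ 2)
      = ∫ s in Ioi (0:ℝ), (2 / Real.sqrt (2 * π))
          * Real.exp (-(lam * s ^ 2 + (a ^ 2 / 2) / s ^ 2)) := by
    apply setIntegral_congr_fun measurableSet_Ioi
    intro s hs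
    have hs0 : (0:ℝ) < s := hs
    have hsqrt : Real.sqrt (2 * Real.pi * s ^ 2) = Real.sqrt (2 * π) * s := by
      rw [Real.sqrt_mul h2π.le, Real.sqrt_sq hs0.le]
    have hsp : (0:ℝ) < Real.sqrt (2 * π) := Real.sqrt_pos.2 h2π
    dsimp only
    rw [smul_eq_mul, abs_of_pos (by linarith : (0:ℝ) < 2 * s), hF]
    dsimp only
    rw [hsqrt, ← Real.exp_add]
    rw [show -(lam * s ^ 2 + a ^ 2 / 2 / s ^ 2) = -lam * s ^ 2 + -a ^ 2 / (2 * s ^ 2) by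
      field_simp; ring]
    field_simp
  rw [hsub, hcong, integral_const_mul, core_aux hlam (by positivity)]
  -- now pure arithmetic
  have hexp : Real.exp (-(2 * Real.sqrt (lam * (a ^ 2 / 2))))
      = Real.exp (-a * Real.sqrt (2 * lam)) := by
    congr 1
    rw [show lam * (a ^ 2 / 2) = a ^ 2 * (lam / 2) by ring,
      Real.sqrt_mul (sq_nonneg a), Real.sqrt_sq ha,
      show (2:ℝ) * lam = 2 ^ 2 * (lam / 2) by ring,
      Real.sqrt_mul (by norm_num : (0:ℝ) ≤ 2 ^ 2),
      Real.sqrt_sq (by norm_num : (0:ℝ) ≤ 2)]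
    ring
  rw [hexp]
  set X : ℝ := lam * (2 / Real.sqrt (2 * π) * (Real.sqrt (π / lam) / 2)) with hX
  have hXnn : 0 ≤ X := by positivity
  have hXsq : X ^ 2 = lam / 2 := by
    have h1 : Real.sqrt (2 * π) ^ 2 = 2 * π := Real.sq_sqrt h2π.le
    have h2 : Real.sqrt (π / lam) ^ 2 = π / lam := Real.sq_sqrt (by positivity)
    have hsp : (0:ℝ) < Real.sqrt (2 * π) := Real.sqrt_pos.2 h2π
    rw [hX, mul_pow, mul_pow, div_pow, div_pow, h1, h2]
    field_simp
  have : Real.sqrt (lam / 2) = X := by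
    rw [← hXsq, Real.sqrt_sq hXnn]
  rw [this, hX]
  ring
end

section
/- For every β ∈ (0,1), t > 0, and x ∈ ℝ, the function p(z) = e^{−(x−z)²/(2t)}/√(2πt) + (2β−1)·sign(z)·e^{−(|x|+|z|)²/(2t)}/√(2πt) is nonnegative for all z ∈ ℝ and satisfies ∫_{−∞}^{∞} p(z) dz = 1. -/
open MeasureTheory Real

lemma measurable_realSign : Measurable Real.sign := by
  unfold Real.sign
  exact Measurable.ite measurableSet_Iio measurable_const
    (Measurable.ite measurableSet_Ioi measurable_const measurable_const)

lemma abs_realSign_le_one (z : ℝ) : |Real.sign z| ≤ 1 := by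
  rcases Real.sign_apply_eq z with h | h | h <;> rw [h] <;> norm_num

theorem stmt13 (β t x : ℝ) (hβ : β ∈ Set.Ioo (0:ℝ) 1) (ht : 0 < t) :
    let p : ℝ → ℝ := fun z =>
      Real.exp (-(x - z) ^ 2 / (2 * t)) / Real.sqrt (2 * Real.pi * t)
        + (2 * β - 1) * Real.sign z * Real.exp (-(|x| + |z|) ^ 2 / (2 * t))
            / Real.sqrt (2 * Real.pi * t)
    (∀ z : ℝ, 0 ≤ p z) ∧ (∫ z : ℝ, p z) = 1 := by
  intro p
  obtain ⟨hβ0, hβ1⟩ := hβ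
  have hπ : (0:ℝ) < Real.pi := Real.pi_pos
  have hc : 0 < Real.sqrt (2 * Real.pi * t) := Real.sqrt_pos.2 (by positivity)
  set c := Real.sqrt (2 * Real.pi * t) with hcdef
  -- key pointwise bound
  have key : ∀ z : ℝ, |(2 * β - 1) * Real.sign z * Real.exp (-(|x| + |z|) ^ 2 / (2 * t))|
      ≤ Real.exp (-(x - z) ^ 2 / (2 * t)) := by
    intro z
    have hE : Real.exp (-(|x| + |z|) ^ 2 / (2 * t)) ≤ Real.exp (-(x - z) ^ 2 / (2 * t)) := by
      apply Real.exp_le_exp.2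
      apply div_le_div_of_nonneg_right ?_ (by positivity) |>.trans_eq rfl
      · have h1 : |x - z| ≤ |x| + |z| := abs_sub x z
        have h2 : (x - z) ^ 2 ≤ (|x| + |z|) ^ 2 := by
          rw [← sq_abs (x - z)]
          exact pow_le_pow_left₀ (abs_nonneg _) h1 2
        linarith
    have hb : |2 * β - 1| ≤ 1 := by
      rw [abs_le]; constructor <;> linarith
    calc |(2 * β - 1) * Real.sign z * Real.exp (-(|x| + |z|) ^ 2 / (2 * t))|
        = |2 * β - 1| * |Real.sign z| * Real.exp (-(|x| + |z|) ^ 2 / (2 * t)) := by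
          rw [abs_mul, abs_mul, abs_of_nonneg (Real.exp_nonneg _)]
      _ ≤ 1 * 1 * Real.exp (-(|x| + |z|) ^ 2 / (2 * t)) := by
          apply mul_le_mul (mul_le_mul hb (abs_realSign_le_one z) (abs_nonneg _) (by norm_num))
            le_rfl (Real.exp_nonneg _) (by norm_num)
      _ = Real.exp (-(|x| + |z|) ^ 2 / (2 * t)) := by ring
      _ ≤ _ := hE
  constructor
  · intro z
    have h := key z
    have h2 : -Real.exp (-(x - z) ^ 2 / (2 * t))
        ≤ (2 * β - 1) * Real.sign z * Real.exp (-(|x| + |z|) ^ 2 / (2 * t)) := by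
      have := neg_abs_le ((2 * β - 1) * Real.sign z * Real.exp (-(|x| + |z|) ^ 2 / (2 * t)))
      linarith
    show 0 ≤ _ / c + _ / c
    rw [← add_div]
    apply div_nonneg _ hc.le
    linarith
  · -- integral
    have hb : (0:ℝ) < 1 / (2 * t) := by positivity
    set f1 : ℝ → ℝ := fun z => Real.exp (-(x - z) ^ 2 / (2 * t)) / c with hf1
    set f2 : ℝ → ℝ := fun z =>
      (2 * β - 1) * Real.sign z * Real.exp (-(|x| + |z|) ^ 2 / (2 * t)) / c with hf2
    set g : ℝ → ℝ := fun u => Real.exp (-(1 / (2 * t)) * u ^ 2) / c with hg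
    have hgeq : ∀ z, f1 z = g (z - x) := by
      intro z
      simp only [hf1, hg]
      congr 1
      congr 1
      ring
    have hgint : Integrable g := (integrable_exp_neg_mul_sq hb).div_const c
    have I1 : Integrable f1 := by
      have := hgint.comp_sub_right x
      simpa [← hgeq] using this
    have I1' : Integrable (fun z => Real.exp (-(x - z) ^ 2 / (2 * t))) := by
      have := I1.const_mul c
      refine this.congr (Filter.Eventually.of_forall fun z => ?_)
      simp only [hf1]
      field_simp
    have I2 : Integrable f2 := by
      apply Integrable.mono' I1
      · exact (((measurable_const.mul measurable_realSign).mul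
          (Real.continuous_exp.comp (by continuity)).measurable).div_const c).aestronglyMeasurable
      · refine Filter.Eventually.of_forall fun z => ?_
        simp only [hf2, hf1]
        rw [Real.norm_eq_abs, abs_div, abs_of_pos hc]
        gcongr
        exact key z
    have hint1 : ∫ z, f1 z = 1 := by
      have h1 : ∫ z, f1 z = ∫ z, g (z - x) := by
        congr 1; funext z; exact hgeq z
      rw [h1, integral_sub_right_eq_self g x]
      simp only [hg]
      rw [integral_div, integral_gaussian]
      rw [show Real.pi / (1 / (2 * t)) = 2 * Real.pi * t by field_simp]
      exact div_self hc.ne'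
    have hodd : ∀ z, f2 (-z) = -f2 z := by
      intro z
      simp only [hf2, Real.sign_neg, abs_neg]
      ring
    have hint2 : ∫ z, f2 z = 0 := by
      have h1 : ∫ z, f2 (-z) = ∫ z, f2 z := integral_neg_eq_self f2 volume
      have h2 : ∫ z, f2 (-z) = -∫ z, f2 z := by
        rw [show (fun z => f2 (-z)) = fun z => -f2 z from funext hodd, integral_neg]
      linarith
    have : (∫ z : ℝ, p z) = (∫ z, f1 z) + ∫ z, f2 z := integral_add I1 I2
    rw [this, hint1, hint2, add_zero]
end

section
/- Fix λ > 0, η > 0, h > 0, q ∈ ℝ. Define φ_δ(y) = e^{(q−y)√(2λ)} + η·e^{−2h√(2λ)}·( e^{(q−y)√(2λ)} − e^{h√(2λ)}·e^{−|y−q−h|√(2λ)} ) / ( √(2λ)·(1 + (η/√(2λ))·(1 − e^{−2h√(2λ)})) ) for y ≥ q. Then φ_δ(q) = 1, φ_δ satisfies (1/2)φ_δ''(y) − λ·φ_δ(y) = 0 for all y ∈ (q,∞) with y ≠ q+h, and the one-sided derivatives at q+h satisfy φ_δ'((q+h)+) − φ_δ'((q+h)−) = 2η·φ_δ(q+h).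 -/
open Real Set Filter

private lemma hdAexp (A k y : ℝ) :
    HasDerivAt (fun y => A * Real.exp (k * y)) (A * k * Real.exp (k * y)) y := by
  have h := (((hasDerivAt_id y).const_mul k).exp).const_mul A
  simp only [id_eq] at h
  refine h.congr_deriv ?_
  ring

private lemma deriv_two (A B k m : ℝ) :
    deriv (fun y => A * Real.exp (k * y) + B * Real.exp (m * y))
      = fun y => (A * k) * Real.exp (k * y) + (B * m) * Real.exp (m * y) := by
  funext y
  exact ((hdAexp A k y).add (hdAexp B m y)).deriv

private lemma dd_two (A B k m y : ℝ) :
    deriv (deriv (fun y => A * Real.exp (k * y) + B * Real.exp (m * y))) y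
      = A * k ^ 2 * Real.exp (k * y) + B * m ^ 2 * Real.exp (m * y) := by
  rw [deriv_two]
  have h := ((hdAexp (A * k) k y).add (hdAexp (B * m) m y)).deriv
  exact h.trans (by ring)

set_option maxHeartbeats 2000000 in
theorem stmt15 (lam η h q : ℝ) (hlam : 0 < lam) (hη : 0 < η) (hh : 0 < h) :
    let s := Real.sqrt (2 * lam)
    let φ : ℝ → ℝ := fun y =>
      Real.exp ((q - y) * s)
        + η * Real.exp (-2 * h * s)
            * (Real.exp ((q - y) * s) - Real.exp (h * s) * Real.exp (-|y - q - h| * s))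
            / (s * (1 + (η / s) * (1 - Real.exp (-2 * h * s))))
    φ q = 1 ∧
      (∀ y, q < y → y ≠ q + h → (1/2) * deriv (deriv φ) y - lam * φ y = 0) ∧
      derivWithin φ (Set.Ici (q + h)) (q + h) - derivWithin φ (Set.Iic (q + h)) (q + h)
        = 2 * η * φ (q + h) := by
  intro s φ
  have hs0 : 0 < s := Real.sqrt_pos.2 (by positivity)
  have hs2 : s ^ 2 = 2 * lam := Real.sq_sqrt (by positivity)
  have hE1 : Real.exp (-2 * h * s) < 1 := by
    rw [Real.exp_lt_one_iff]
    nlinarith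
  have hD : 0 < s * (1 + (η / s) * (1 - Real.exp (-2 * h * s))) := by
    have h1 : 0 < η / s := div_pos hη hs0
    have h2 : 0 < 1 - Real.exp (-2 * h * s) := by linarith
    nlinarith [mul_pos h1 h2]
  set C : ℝ := η * Real.exp (-2 * h * s)
      / (s * (1 + (η / s) * (1 - Real.exp (-2 * h * s)))) with hC
  have hφ : ∀ y, φ y = Real.exp ((q - y) * s)
      + C * (Real.exp ((q - y) * s) - Real.exp (h * s) * Real.exp (-|y - q - h| * s)) := by
    intro y
    show Real.exp ((q - y) * s)
        + η * Real.exp (-2 * h * s)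
            * (Real.exp ((q - y) * s) - Real.exp (h * s) * Real.exp (-|y - q - h| * s))
            / (s * (1 + (η / s) * (1 - Real.exp (-2 * h * s)))) = _
    rw [hC]; ring
  have h1 : ∀ y, y ≤ q + h → φ y
      = ((1 + C) * Real.exp (q * s)) * Real.exp (-s * y)
        + (-(C * Real.exp (-(q * s)))) * Real.exp (s * y) := by
    intro y hy
    rw [hφ, abs_of_nonpos (by linarith : y - q - h ≤ 0)]
    have e1 : Real.exp ((q - y) * s) = Real.exp (q * s) * Real.exp (-s * y) := by
      rw [← Real.exp_add]; congr 1; ring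
    have e2 : Real.exp (h * s) * Real.exp (- -(y - q - h) * s)
        = Real.exp (-(q * s)) * Real.exp (s * y) := by
      rw [← Real.exp_add, ← Real.exp_add]; congr 1; ring
    rw [e1, e2]; ring
  have h2 : ∀ y, q + h ≤ y → φ y
      = ((1 + C) * Real.exp (q * s) - C * Real.exp ((q + 2 * h) * s)) * Real.exp (-s * y)
        + 0 * Real.exp (s * y) := by
    intro y hy
    rw [hφ, abs_of_nonneg (by linarith : (0:ℝ) ≤ y - q - h)]
    have e1 : Real.exp ((q - y) * s) = Real.exp (q * s) * Real.exp (-s * y) := by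
      rw [← Real.exp_add]; congr 1; ring
    have e3 : Real.exp (h * s) * Real.exp (-(y - q - h) * s)
        = Real.exp ((q + 2 * h) * s) * Real.exp (-s * y) := by
      rw [← Real.exp_add, ← Real.exp_add]; congr 1; ring
    rw [e1, e3]; ring
  refine ⟨?_, ?_, ?_⟩
  · -- φ q = 1
    rw [hφ q, show q - q - h = -h by ring, abs_neg, abs_of_pos hh,
      show (q - q) * s = 0 by ring, Real.exp_zero, ← Real.exp_add,
      show h * s + -h * s = 0 by ring, Real.exp_zero]
    ring
  · -- ODE
    intro y hy hne
    rcases lt_or_gt_of_ne hne with hlt | hgt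
    · have heq : Set.EqOn φ (fun z => ((1 + C) * Real.exp (q * s)) * Real.exp (-s * z)
          + (-(C * Real.exp (-(q * s)))) * Real.exp (s * z)) (Set.Iio (q + h)) :=
        fun z hz => h1 z (le_of_lt hz)
      have hev : deriv φ =ᶠ[nhds y] deriv (fun z => ((1 + C) * Real.exp (q * s)) * Real.exp (-s * z)
          + (-(C * Real.exp (-(q * s)))) * Real.exp (s * z)) := by
        filter_upwards [Iio_mem_nhds hlt] with z hz
        exact Filter.EventuallyEq.deriv_eq
          (Filter.eventuallyEq_of_mem (Iio_mem_nhds hz) heq)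
      rw [hev.deriv_eq, dd_two, h1 y hlt.le, neg_pow]
      simp only [hs2]
      ring_nf
    · have heq : Set.EqOn φ (fun z => ((1 + C) * Real.exp (q * s)
            - C * Real.exp ((q + 2 * h) * s)) * Real.exp (-s * z)
          + 0 * Real.exp (s * z)) (Set.Ioi (q + h)) :=
        fun z hz => h2 z (le_of_lt hz)
      have hev : deriv φ =ᶠ[nhds y] deriv (fun z => ((1 + C) * Real.exp (q * s)
            - C * Real.exp ((q + 2 * h) * s)) * Real.exp (-s * z)
          + 0 * Real.exp (s * z)) := by
        filter_upwards [Ioi_mem_nhds hgt] with z hz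
        exact Filter.EventuallyEq.deriv_eq
          (Filter.eventuallyEq_of_mem (Ioi_mem_nhds hz) heq)
      rw [hev.deriv_eq, dd_two, h2 y hgt.le, neg_pow]
      simp only [hs2]
      ring_nf
  · -- jump of derivative
    have e1v : derivWithin φ (Set.Iic (q + h)) (q + h)
        = ((1 + C) * Real.exp (q * s)) * (-s) * Real.exp (-s * (q + h))
          + (-(C * Real.exp (-(q * s)))) * s * Real.exp (s * (q + h)) := by
      have hcg : derivWithin φ (Set.Iic (q + h)) (q + h)
          = derivWithin (fun z => ((1 + C) * Real.exp (q * s)) * Real.exp (-s * z)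
              + (-(C * Real.exp (-(q * s)))) * Real.exp (s * z)) (Set.Iic (q + h)) (q + h) :=
        derivWithin_congr (fun z hz => h1 z hz) (h1 _ le_rfl)
      rw [hcg]
      exact (((hdAexp ((1 + C) * Real.exp (q * s)) (-s) (q + h)).add
        (hdAexp (-(C * Real.exp (-(q * s)))) s (q + h))).hasDerivWithinAt).derivWithin
        (uniqueDiffOn_Iic (q + h) (q + h) Set.self_mem_Iic)
    have e2v : derivWithin φ (Set.Ici (q + h)) (q + h)
        = ((1 + C) * Real.exp (q * s) - C * Real.exp ((q + 2 * h) * s)) * (-s)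
            * Real.exp (-s * (q + h))
          + 0 * s * Real.exp (s * (q + h)) := by
      have hcg : derivWithin φ (Set.Ici (q + h)) (q + h)
          = derivWithin (fun z => ((1 + C) * Real.exp (q * s)
              - C * Real.exp ((q + 2 * h) * s)) * Real.exp (-s * z)
              + 0 * Real.exp (s * z)) (Set.Ici (q + h)) (q + h) :=
        derivWithin_congr (fun z hz => h2 z hz) (h2 _ le_rfl)
      rw [hcg]
      exact (((hdAexp ((1 + C) * Real.exp (q * s) - C * Real.exp ((q + 2 * h) * s)) (-s)
        (q + h)).add (hdAexp 0 s (q + h))).hasDerivWithinAt).derivWithin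
        (uniqueDiffOn_Ici (q + h) (q + h) Set.self_mem_Ici)
    rw [e1v, e2v, h1 (q + h) le_rfl]
    have r1 : Real.exp (-s * (q + h)) = (Real.exp (q * s) * Real.exp (h * s))⁻¹ := by
      rw [← Real.exp_add, ← Real.exp_neg]; congr 1; ring
    have r2 : Real.exp (s * (q + h)) = Real.exp (q * s) * Real.exp (h * s) := by
      rw [← Real.exp_add]; congr 1; ring
    have r3 : Real.exp (-(q * s)) = (Real.exp (q * s))⁻¹ := Real.exp_neg _
    have r4 : Real.exp ((q + 2 * h) * s)
        = Real.exp (q * s) * (Real.exp (h * s) * Real.exp (h * s)) := by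
      rw [← Real.exp_add, ← Real.exp_add]; congr 1; ring
    have r5 : Real.exp (-2 * h * s) = (Real.exp (h * s) * Real.exp (h * s))⁻¹ := by
      rw [← Real.exp_add, ← Real.exp_neg]; congr 1; ring
    rw [r1, r2, r3, r4]
    have hCeq : C * (s * (1 + η / s * (1 - (Real.exp (h * s) * Real.exp (h * s))⁻¹)))
        = η * (Real.exp (h * s) * Real.exp (h * s))⁻¹ := by
      rw [← r5, hC]
      exact div_mul_cancel₀ _ hD.ne'
    have hu : Real.exp (h * s) ≠ 0 := (Real.exp_pos _).ne'
    have hv : Real.exp (q * s) ≠ 0 := (Real.exp_pos _).ne'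
    have hsne : s ≠ 0 := hs0.ne'
    generalize Real.exp (h * s) = u at hu hCeq ⊢
    generalize Real.exp (q * s) = v at hv ⊢
    generalize hgs : s = t at hsne hCeq ⊢
    generalize hgc : C = c at hCeq ⊢
    clear r1 r2 r3 r4 r5 hC hφ h1 h2 e1v e2v hD hE1 hs2 C φ hs0 hgs hgc s hh hη hlam
    field_simp at hCeq ⊢
    have hCeq2 : c * (t * u ^ 2 + η * u ^ 2 - η) = η := by
      apply mul_left_cancel₀ (mul_ne_zero hsne (mul_ne_zero hu hu))
      linear_combination (t * (u * u)) * hCeq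
    linear_combination 2 * hCeq2
end

section
/- Fix λ > 0, η > 0, h > 0, q ∈ ℝ. Define ψ_δ(y) = e^{(y−q)√(2λ)} + (η/√(2λ))·( e^{(y−q)√(2λ)} − e^{h√(2λ)}·e^{−|y−q−h|√(2λ)} ) and φ_δ as the decreasing fundamental solution φ_δ(y) = e^{(q−y)√(2λ)} + η·e^{−2h√(2λ)}·( e^{(q−y)√(2λ)} − e^{h√(2λ)}·e^{−|y−q−h|√(2λ)} )/( √(2λ)(1 + (η/√(2λ))(1 − e^{−2h√(2λ)})) ). Then the Wronskian at q satisfies ψ_δ'(q) − φ_δ'(q) = 2√(2λ)·(1 + η/√(2λ)) / (1 + (η/√(2λ))·(1 − e^{−2h√(2λ)})). -/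
theorem stmt16 (lam η h q : ℝ) (hlam : 0 < lam) (hη : 0 < η) (hh : 0 < h) :
    let s := Real.sqrt (2 * lam)
    let ψ : ℝ → ℝ := fun y =>
      Real.exp ((y - q) * s)
        + (η / s) * (Real.exp ((y - q) * s) - Real.exp (h * s) * Real.exp (-|y - q - h| * s))
    let φ : ℝ → ℝ := fun y =>
      Real.exp ((q - y) * s)
        + η * Real.exp (-2 * h * s)
            * (Real.exp ((q - y) * s) - Real.exp (h * s) * Real.exp (-|y - q - h| * s))
            / (s * (1 + (η / s) * (1 - Real.exp (-2 * h * s))))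
    deriv ψ q - deriv φ q
      = 2 * s * (1 + η / s) / (1 + (η / s) * (1 - Real.exp (-2 * h * s))) := by
  intro s ψ φ
  have hs : 0 < s := Real.sqrt_pos.mpr (by linarith)
  have hsne : s ≠ 0 := ne_of_gt hs
  set D : ℝ := 1 + (η / s) * (1 - Real.exp (-2 * h * s)) with hD
  have hexp_lt : Real.exp (-2 * h * s) < 1 := by
    rw [Real.exp_lt_one_iff]; nlinarith
  have hDpos : 0 < D := by
    have h0 : 0 ≤ (η / s) * (1 - Real.exp (-2 * h * s)) := by
      apply mul_nonneg (le_of_lt (div_pos hη hs)); linarith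
    rw [hD]; linarith
  have hDne : D ≠ 0 := ne_of_gt hDpos
  -- smooth versions near q
  set ψ2 : ℝ → ℝ := fun y =>
    Real.exp ((y - q) * s)
      + (η / s) * (Real.exp ((y - q) * s) - Real.exp (h * s) * Real.exp ((y - q - h) * s))
    with hψ2
  set φ2 : ℝ → ℝ := fun y =>
    Real.exp ((q - y) * s)
      + η * Real.exp (-2 * h * s)
          * (Real.exp ((q - y) * s) - Real.exp (h * s) * Real.exp ((y - q - h) * s))
          / (s * D) with hφ2
  have habs : ∀ y ∈ Set.Iio (q + h), -|y - q - h| = y - q - h := by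
    intro y hy
    have : y - q - h < 0 := by simp at hy; linarith
    rw [abs_of_neg this]; ring
  have hmem : Set.Iio (q + h) ∈ nhds q := Iio_mem_nhds (by linarith)
  have heψ : ψ =ᶠ[nhds q] ψ2 := by
    filter_upwards [hmem] with y hy
    simp only [ψ, hψ2, habs y hy]
  have heφ : φ =ᶠ[nhds q] φ2 := by
    filter_upwards [hmem] with y hy
    simp only [φ, hφ2, habs y hy]
    rfl
  rw [heψ.deriv_eq, heφ.deriv_eq]
  -- basic derivatives
  have h1 : HasDerivAt (fun y : ℝ => Real.exp ((y - q) * s)) s q := by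
    have := (((hasDerivAt_id q).sub_const q).mul_const s).exp
    simpa using this
  have h2 : HasDerivAt (fun y : ℝ => Real.exp ((y - q - h) * s))
      (Real.exp (-h * s) * s) q := by
    have := ((((hasDerivAt_id q).sub_const q).sub_const h).mul_const s).exp
    simpa using this
  have h3 : HasDerivAt (fun y : ℝ => Real.exp ((q - y) * s)) (-s) q := by
    have := (((hasDerivAt_const q q).sub (hasDerivAt_id q)).mul_const s).exp
    simpa using this
  have hψ2' : HasDerivAt ψ2
      (s + (η / s) * (s - Real.exp (h * s) * (Real.exp (-h * s) * s))) q := by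
    exact h1.add (((h1.sub ((h2.const_mul (Real.exp (h * s))))).const_mul (η / s)).congr_deriv
      (by ring))
  have hφ2' : HasDerivAt φ2
      (-s + η * Real.exp (-2 * h * s)
          * (-s - Real.exp (h * s) * (Real.exp (-h * s) * s)) / (s * D)) q := by
    exact h3.add ((((h3.sub (h2.const_mul (Real.exp (h * s)))).const_mul
      (η * Real.exp (-2 * h * s))).div_const (s * D)).congr_deriv (by ring))
  rw [hψ2'.deriv, hφ2'.deriv]
  have hcancel : Real.exp (h * s) * Real.exp (-h * s) = 1 := by
    rw [← Real.exp_add]; simp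
  have hE : Real.exp (h * s) * (Real.exp (-h * s) * s) = s := by
    rw [← mul_assoc, hcancel, one_mul]
  rw [hE]
  rw [eq_div_iff hDne]
  have hsD : s * D ≠ 0 := mul_ne_zero hsne hDne
  field_simp [hsD]
  rw [hD]
  field_simp
  ring
end
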